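/- For m = 2^S, N = mM, and all 1 ≤ k ≤ S, the partial product A_k · A_{k-1} ⋯ A_1 equals I_{2^{S-k}} ⊗ (1/2^k)J_{2^k} ⊗ (1/M)J_M. -/
import Mathlib

open Matrix Kronecker

/-- The k×k all-ones matrix. -/
noncomputable def J (k : ℕ) : Matrix (Fin k) (Fin k) ℝ := Matrix.of fun _ _ => 1

/-- The matrix `A_s := I_{2^{S-s}} ⊗ (1/2)J_2 ⊗ I_{2^{s-1}} ⊗ (1/M)J_M`
on the product index type. -/
noncomputable def Akron (S M s : ℕ) :
    Matrix (((Fin (2^(S-s)) × Fin 2) × Fin (2^(s-1))) × Fin M)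
           (((Fin (2^(S-s)) × Fin 2) × Fin (2^(s-1))) × Fin M) ℝ :=
  (((1 : Matrix (Fin (2^(S-s))) (Fin (2^(S-s))) ℝ) ⊗ₖ ((1/2 : ℝ) • J 2)) ⊗ₖ
      (1 : Matrix (Fin (2^(s-1))) (Fin (2^(s-1))) ℝ)) ⊗ₖ ((1/(M:ℝ)) • J M)

/-- Flattening equivalence for a triple Kronecker product (row-major order). -/
def bEquiv (a b c : ℕ) : (Fin a × Fin b) × Fin c ≃ Fin (a * b * c) :=
  (finProdFinEquiv.prodCongr (Equiv.refl (Fin c))).trans finProdFinEquiv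

/-- Flattening equivalence for a fourfold Kronecker product (row-major order). -/
def aEquiv (a b c d : ℕ) : ((Fin a × Fin b) × Fin c) × Fin d ≃ Fin (a * b * c * d) :=
  ((bEquiv a b c).prodCongr (Equiv.refl (Fin d))).trans finProdFinEquiv

lemma size_eq (S s M : ℕ) (h1 : 1 ≤ s) (h2 : s ≤ S) :
    2^(S-s) * 2 * 2^(s-1) * M = 2^S * M := by
  have hS : S - s + (s - 1) + 1 = S := by omega
  calc 2^(S-s) * 2 * 2^(s-1) * M = (2^(S-s) * 2^(s-1) * 2^1) * M := by ring
    _ = 2^(S - s + (s-1) + 1) * M := by rw [pow_add, pow_add]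
    _ = 2^S * M := by rw [hS]

/-- The matrix `A_s` viewed as an `N × N` matrix, `N = 2^S·M`, with the rows and
columns ordered consistently with the Kronecker (row-major) structure. -/
noncomputable def Amat (S M s : ℕ) : Matrix (Fin (2^S * M)) (Fin (2^S * M)) ℝ :=
  if h : 1 ≤ s ∧ s ≤ S then
    Matrix.reindex
      ((aEquiv (2^(S-s)) 2 (2^(s-1)) M).trans (finCongr (size_eq S s M h.1 h.2)))
      ((aEquiv (2^(S-s)) 2 (2^(s-1)) M).trans (finCongr (size_eq S s M h.1 h.2)))
      (Akron S M s)
  else 0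

lemma size_eqB (S s : ℕ) (h1 : 1 ≤ s) (h2 : s ≤ S) :
    2^(S-s) * 2 * 2^(s-1) = 2^S := by
  have := size_eq S s 1 h1 h2
  simpa using this

/-- The matrix `B_s := I_{2^{S-s}} ⊗ (1/2)J_2 ⊗ I_{2^{s-1}}` viewed as an
`m × m` matrix, `m = 2^S`. -/
noncomputable def Bmat (S s : ℕ) : Matrix (Fin (2^S)) (Fin (2^S)) ℝ :=
  if h : 1 ≤ s ∧ s ≤ S then
    Matrix.reindex
      ((bEquiv (2^(S-s)) 2 (2^(s-1))).trans (finCongr (size_eqB S s h.1 h.2)))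
      ((bEquiv (2^(S-s)) 2 (2^(s-1))).trans (finCongr (size_eqB S s h.1 h.2)))
      (((1 : Matrix (Fin (2^(S-s))) (Fin (2^(S-s))) ℝ) ⊗ₖ ((1/2 : ℝ) • J 2)) ⊗ₖ
        (1 : Matrix (Fin (2^(s-1))) (Fin (2^(s-1))) ℝ))
  else 0

lemma size_eqC (S k M : ℕ) (h : k ≤ S) : 2^(S-k) * 2^k * M = 2^S * M := by
  have hS : S - k + k = S := by omega
  rw [← pow_add, hS]

/-- The matrix `I_{2^{S-k}} ⊗ (1/2^k)J_{2^k} ⊗ (1/M)J_M` viewed as an `N × N`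
matrix, `N = 2^S·M`. -/
noncomputable def Cmat (S M k : ℕ) : Matrix (Fin (2^S * M)) (Fin (2^S * M)) ℝ :=
  if h : k ≤ S then
    Matrix.reindex
      ((bEquiv (2^(S-k)) (2^k) M).trans (finCongr (size_eqC S k M h)))
      ((bEquiv (2^(S-k)) (2^k) M).trans (finCongr (size_eqC S k M h)))
      (((1 : Matrix (Fin (2^(S-k))) (Fin (2^(S-k))) ℝ) ⊗ₖ ((1/(2^k : ℝ)) • J (2^k))) ⊗ₖ
        ((1/(M:ℝ)) • J M))
  else 0

/- ---------------- auxiliary lemmas ---------------- -/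

lemma bEquiv_val (a b c : ℕ) (p : (Fin a × Fin b) × Fin c) :
    ((bEquiv a b c p : Fin (a*b*c)) : ℕ) = p.2 + c * (p.1.2 + b * p.1.1) := by
  simp [bEquiv]

lemma aEquiv_val (a b c d : ℕ) (p : ((Fin a × Fin b) × Fin c) × Fin d) :
    ((aEquiv a b c d p : Fin (a*b*c*d)) : ℕ)
      = p.2 + d * (p.1.2 + c * (p.1.1.2 + b * p.1.1.1)) := by
  simp [aEquiv, bEquiv]

lemma div1 (M t w : ℕ) (hw : w < M) : (w + M * t) / M = t := by
  have hM : 0 < M := lt_of_le_of_lt (Nat.zero_le w) hw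
  rw [Nat.add_mul_div_left _ _ hM, Nat.div_eq_of_lt hw, Nat.zero_add]

lemma mod1 (c z t : ℕ) (hz : z < c) : (z + c * t) % c = z := by
  rw [Nat.add_mul_mod_self_left, Nat.mod_eq_of_lt hz]

/-- the key div/mod decomposition facts for `n = w + M*(z + c*(y + 2*x))`. -/
lemma decompA (M c x y z w : ℕ) (hy : y < 2) (hz : z < c) (hw : w < M) :
    (w + M * (z + c * (y + 2 * x))) / (2 * c * M) = x ∧
    ((w + M * (z + c * (y + 2 * x))) / M) % c = z ∧
    (w + M * (z + c * (y + 2 * x))) / (c * M) = y + 2 * x := by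
  have h1 : (w + M * (z + c * (y + 2 * x))) / M = z + c * (y + 2 * x) := div1 _ _ _ hw
  refine ⟨?_, ?_, ?_⟩
  · have : 2 * c * M = M * c * 2 := by ring
    rw [this, ← Nat.div_div_eq_div_mul, ← Nat.div_div_eq_div_mul, h1,
      div1 c _ z hz]
    omega
  · rw [h1, mod1 _ _ _ hz]
  · have : c * M = M * c := by ring
    rw [this, ← Nat.div_div_eq_div_mul, h1, div1 c _ z hz]


lemma J_apply (k : ℕ) (i j : Fin k) : J k i j = 1 := rfl

lemma decompC (M b x y w : ℕ) (hy : y < b) (hw : w < M) :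
    (w + M * (y + b * x)) / (b * M) = x := by
  have hbm : b * M = M * b := by ring
  rw [hbm, ← Nat.div_div_eq_div_mul, div1 _ _ _ hw, div1 _ _ _ hy]

lemma Amat_apply (S M s : ℕ) (h1 : 1 ≤ s) (h2 : s ≤ S) (i j : Fin (2^S * M)) :
    Amat S M s i j =
      if (i : ℕ) / (2^s * M) = (j : ℕ) / (2^s * M) ∧
         ((i : ℕ) / M) % 2^(s-1) = ((j : ℕ) / M) % 2^(s-1)
      then 1 / (2 * (M:ℝ)) else 0 := by
  have hs2 : (2:ℕ)^s = 2 * 2^(s-1) := by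
    conv_lhs => rw [show s = (s-1) + 1 by omega]
    ring
  rw [Amat, dif_pos ⟨h1, h2⟩, reindex_apply, submatrix_apply]
  set e := ((aEquiv (2^(S-s)) 2 (2^(s-1)) M).trans (finCongr (size_eq S s M h1 h2))) with he
  have key : ∀ (u : Fin (2^S * M)),
      ((u:ℕ) / (2^s * M) = ((e.symm u).1.1.1 : ℕ)) ∧
      (((u:ℕ) / M) % 2^(s-1) = ((e.symm u).1.2 : ℕ)) := by
    intro u
    have hu : (u : ℕ) = ((e.symm u).2 : ℕ) + M * (((e.symm u).1.2 : ℕ)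
        + 2^(s-1) * (((e.symm u).1.1.2 : ℕ) + 2 * ((e.symm u).1.1.1 : ℕ))) := by
      conv_lhs => rw [← e.apply_symm_apply u]
      rw [he]
      simp only [Equiv.trans_apply, finCongr_apply, Fin.coe_cast, aEquiv_val]
    obtain ⟨d1, d2, _⟩ := decompA M (2^(s-1)) ((e.symm u).1.1.1 : ℕ) ((e.symm u).1.1.2 : ℕ)
      ((e.symm u).1.2 : ℕ) ((e.symm u).2 : ℕ)
      ((e.symm u).1.1.2).isLt ((e.symm u).1.2).isLt ((e.symm u).2).isLt
    constructor
    · rw [hu, hs2]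
      exact d1
    · rw [hu]
      exact d2
  obtain ⟨ki1, ki2⟩ := key i
  obtain ⟨kj1, kj2⟩ := key j
  rw [ki1, ki2, kj1, kj2]
  rcases hi : e.symm i with ⟨⟨⟨xi, yi⟩, zi⟩, wi⟩
  rcases hj : e.symm j with ⟨⟨⟨xj, yj⟩, zj⟩, wj⟩
  simp only [Akron, kroneckerMap_apply, Matrix.one_apply, Matrix.smul_apply, J_apply,
    Matrix.of_apply, smul_eq_mul, mul_one, Fin.val_eq_val]
  split_ifs with hc h1' h2' <;> simp_all <;> ring

lemma Cmat_apply (S M k : ℕ) (hk : k ≤ S) (i j : Fin (2^S * M)) :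
    Cmat S M k i j =
      if (i : ℕ) / (2^k * M) = (j : ℕ) / (2^k * M)
      then 1 / ((2^k : ℝ) * M) else 0 := by
  rw [Cmat, dif_pos hk, reindex_apply, submatrix_apply]
  set e := ((bEquiv (2^(S-k)) (2^k) M).trans (finCongr (size_eqC S k M hk))) with he
  have key : ∀ (u : Fin (2^S * M)),
      (u:ℕ) / (2^k * M) = ((e.symm u).1.1 : ℕ) := by
    intro u
    have hu : (u : ℕ) = ((e.symm u).2 : ℕ) + M * (((e.symm u).1.2 : ℕ)
        + 2^k * ((e.symm u).1.1 : ℕ)) := by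
      conv_lhs => rw [← e.apply_symm_apply u]
      rw [he]
      simp only [Equiv.trans_apply, finCongr_apply, Fin.coe_cast, bEquiv_val]
    rw [hu]
    exact decompC M (2^k) _ _ _ ((e.symm u).1.2).isLt ((e.symm u).2).isLt
  rw [key i, key j]
  rcases hi : e.symm i with ⟨⟨xi, yi⟩, wi⟩
  rcases hj : e.symm j with ⟨⟨xj, yj⟩, wj⟩
  simp only [kroneckerMap_apply, Matrix.one_apply, Matrix.smul_apply, J_apply,
    Matrix.of_apply, smul_eq_mul, mul_one, Fin.val_eq_val]
  split_ifs with hc h1' <;> simp_all <;> ring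

lemma key_mul (S M k : ℕ) (hM : 0 < M) (hkS : k + 1 ≤ S) :
    Amat S M (k+1) * Cmat S M k = Cmat S M (k+1) := by
  have hpow : (2:ℕ)^S * M = 2^(S-(k+1)) * 2 * 2^k * M := by
    have := size_eq S (k+1) M (by omega) hkS
    simpa using this.symm
  set e : ((Fin (2^(S-(k+1))) × Fin 2) × Fin (2^k)) × Fin M ≃ Fin (2^S * M) :=
    (aEquiv (2^(S-(k+1))) 2 (2^k) M).trans (finCongr hpow.symm) with hedef
  ext i j
  rw [Matrix.mul_apply, Cmat_apply S M (k+1) hkS]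
  simp only [Amat_apply S M (k+1) (by omega) hkS, Cmat_apply S M k (by omega),
    Nat.add_sub_cancel]
  rw [← Equiv.sum_comp e]
  have hep : ∀ p : ((Fin (2^(S-(k+1))) × Fin 2) × Fin (2^k)) × Fin M,
      ((e p : Fin (2^S*M)) : ℕ)
        = (p.2:ℕ) + M * ((p.1.2:ℕ) + 2^k * ((p.1.1.2:ℕ) + 2 * (p.1.1.1:ℕ))) := by
    intro p
    rw [hedef]
    simp only [Equiv.trans_apply, finCongr_apply, Fin.coe_cast, aEquiv_val]
  have f1 : ∀ p : ((Fin (2^(S-(k+1))) × Fin 2) × Fin (2^k)) × Fin M,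
      ((e p : Fin (2^S*M)) : ℕ) / (2^(k+1) * M) = (p.1.1.1 : ℕ) := by
    intro p
    rw [hep p, show (2:ℕ)^(k+1) * M = 2 * 2^k * M by ring]
    exact (decompA M (2^k) _ _ _ _ p.1.1.2.isLt p.1.2.isLt p.2.isLt).1
  have f2 : ∀ p : ((Fin (2^(S-(k+1))) × Fin 2) × Fin (2^k)) × Fin M,
      (((e p : Fin (2^S*M)) : ℕ) / M) % 2^k = (p.1.2 : ℕ) := by
    intro p
    rw [hep p]
    exact (decompA M (2^k) _ _ _ _ p.1.1.2.isLt p.1.2.isLt p.2.isLt).2.1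
  have f3 : ∀ p : ((Fin (2^(S-(k+1))) × Fin 2) × Fin (2^k)) × Fin M,
      ((e p : Fin (2^S*M)) : ℕ) / (2^k * M) = (p.1.1.2 : ℕ) + 2 * (p.1.1.1 : ℕ) := by
    intro p
    rw [hep p]
    exact (decompA M (2^k) _ _ _ _ p.1.1.2.isLt p.1.2.isLt p.2.isLt).2.2
  have hx0 : (i:ℕ)/(2^(k+1)*M) < 2^(S-(k+1)) := by
    apply Nat.div_lt_of_lt_mul
    calc (i:ℕ) < 2^S * M := i.isLt
      _ = 2^(k+1)*M * 2^(S-(k+1)) := by rw [show (2:ℕ)^S = 2^(k+1) * 2^(S-(k+1)) by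
            rw [← pow_add]; congr 1; omega]; ring
  have hz0 : (i:ℕ)/M % 2^k < 2^k := Nat.mod_lt _ (by positivity)
  set x0 : Fin (2^(S-(k+1))) := ⟨(i:ℕ)/(2^(k+1)*M), hx0⟩ with hx0def
  set z0 : Fin (2^k) := ⟨(i:ℕ)/M % 2^k, hz0⟩ with hz0def
  set t := (j:ℕ) / (2^k * M) with ht
  have hcond1 : ∀ x : Fin (2^(S-(k+1))), ((i:ℕ)/(2^(k+1)*M) = (x:ℕ)) ↔ x = x0 := by
    intro x
    rw [Fin.ext_iff]
    exact eq_comm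
  have hcond2 : ∀ z : Fin (2^k), ((i:ℕ)/M % 2^k = (z:ℕ)) ↔ z = z0 := by
    intro z
    rw [Fin.ext_iff]
    exact eq_comm
  have hj2 : (j:ℕ)/(2^(k+1)*M) = t/2 := by
    rw [ht, Nat.div_div_eq_div_mul]
    congr 1
    ring
  simp only [f1, f2, f3, hcond1, hcond2, hj2]
  rw [Fintype.sum_prod_type]
  simp only [Fintype.sum_prod_type]
  simp only [ite_and, ite_mul, zero_mul, mul_ite, mul_zero,
    Finset.sum_ite_eq', Finset.mem_univ, if_true, Finset.sum_const,
    Finset.card_univ, Fintype.card_fin, nsmul_eq_mul]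
  have swap : ∀ (C : ℝ) (x : Fin (2^(S-(k+1)))) (y : Fin 2) (z : Fin (2^k)),
      (if (y:ℕ) + 2*(x:ℕ) = t then (if x = x0 then (if z = z0 then C else 0) else 0) else 0)
        = if x = x0 then (if z = z0 then (if (y:ℕ) + 2*(x:ℕ) = t then C else 0) else 0)
          else 0 := by
    intro C x y z
    split_ifs <;> rfl
  simp only [swap]
  simp only [Finset.sum_ite_irrel, Finset.sum_const_zero, Finset.sum_ite_eq',
    Finset.mem_univ, if_true]
  rw [Fin.sum_univ_two]
  simp only [Fin.val_zero, Fin.val_one]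
  have hM0 : (M:ℝ) ≠ 0 := Nat.cast_ne_zero.mpr hM.ne'
  have hval : (M:ℝ) * (1 / (2 * ↑M) * (1 / (2 ^ k * ↑M))) = 1 / (2 ^ (k+1) * ↑M) := by
    field_simp
    ring
  have hsplit : ∀ q : ℕ,
      ((if 0 + 2*q = t then (M:ℝ) * (1 / (2 * (M:ℝ)) * (1 / ((2:ℝ) ^ k * (M:ℝ)))) else 0) +
        if 1 + 2*q = t then (M:ℝ) * (1 / (2 * (M:ℝ)) * (1 / ((2:ℝ) ^ k * (M:ℝ)))) else 0)
        = if q = t / 2 then 1 / ((2:ℝ) ^ (k+1) * (M:ℝ)) else 0 := by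
    intro q
    split_ifs <;>
      first
        | (exfalso; omega)
        | (simp only [add_zero, zero_add]; exact hval)
        | norm_num
  exact hsplit _

lemma base_case (S M : ℕ) (hS : 1 ≤ S) : Amat S M 1 = Cmat S M 1 := by
  ext i j
  rw [Amat_apply S M 1 le_rfl hS, Cmat_apply S M 1 hS]
  norm_num [Nat.mod_one]

/-- for all `1 ≤ k ≤ S`, the partial product `A_k · A_{k-1} ⋯ A_1`
equals `I_{2^{S-k}} ⊗ (1/2^k)J_{2^k} ⊗ (1/M)J_M`. -/
theorem stmt6 (S M : ℕ) (hS : 0 < S) (hM : 0 < M) (k : ℕ) (hk1 : 1 ≤ k) (hkS : k ≤ S) :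
    (List.ofFn (fun t : Fin k => Amat S M (k - (t : ℕ)))).prod = Cmat S M k := by
  revert hkS
  induction k, hk1 using Nat.le_induction with
  | base =>
    intro hkS
    simp only [List.ofFn_succ, Fin.val_zero, Nat.sub_zero, List.ofFn_zero,
      List.prod_cons, List.prod_nil, mul_one]
    exact base_case S M hkS
  | succ n hn ih =>
    intro hkS
    have h1 : List.ofFn (fun t : Fin (n+1) => Amat S M (n+1 - (t:ℕ)))
        = Amat S M (n+1) :: List.ofFn (fun t : Fin n => Amat S M (n - (t:ℕ))) := by
      rw [List.ofFn_succ]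
      simp only [Fin.val_zero, Nat.sub_zero, Fin.val_succ, Nat.add_sub_add_right]
    rw [h1, List.prod_cons, ih (by omega), key_mul S M n hM hkS]
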